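/- For nonnegative real numbers p12, p13, p14, p23, p24, p34, the three triangle inequalities √(p12·p34) ≤ √(p13·p24) + √(p14·p23), √(p13·p24) ≤ √(p12·p34) + √(p14·p23), and √(p14·p23) ≤ √(p12·p34) + √(p13·p24) hold if and only if the 4×4 symmetric matrix with zero diagonal and off-diagonal entries p_{ij} (for i<j, symmetrized) has at most one positive eigenvalue. -/

import Mathlib

open Matrix in
private lemma herm_trace' {n : ℕ} {A : Matrix (Fin n) (Fin n) ℝ} (hA : A.IsHermitian) :
    A.trace = ∑ i, hA.eigenvalues i := by
  conv_lhs => rw [hA.spectral_theorem]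
  rw [Unitary.conjStarAlgAut_apply]
  rw [Matrix.trace_mul_cycle]
  rw [Matrix.mem_unitaryGroup_iff'.mp hA.eigenvectorUnitary.2, Matrix.one_mul,
    Matrix.trace_diagonal]
  simp

open Matrix in
private lemma herm_trace_cube' {n : ℕ} {A : Matrix (Fin n) (Fin n) ℝ} (hA : A.IsHermitian) :
    (A * A * A).trace = ∑ i, (hA.eigenvalues i)^3 := by
  set U := (hA.eigenvectorUnitary : Matrix (Fin n) (Fin n) ℝ) with hUdef
  have h1 : star U * U = 1 := Matrix.mem_unitaryGroup_iff'.mp hA.eigenvectorUnitary.2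
  set D := Matrix.diagonal (RCLike.ofReal ∘ hA.eigenvalues : Fin n → ℝ) with hD
  have hA3 : A * A * A = U * (D * D * D) * star U := by
    conv_lhs => rw [hA.spectral_theorem]
    rw [Unitary.conjStarAlgAut_apply]
    simp only [← hUdef, ← hD, Matrix.mul_assoc]
    rw [← Matrix.mul_assoc (star U) U, h1, Matrix.one_mul,
        ← Matrix.mul_assoc (star U) U, h1, Matrix.one_mul]
  rw [hA3, Matrix.trace_mul_cycle, ← Matrix.mul_assoc, h1, Matrix.one_mul]
  rw [hD]
  simp [Matrix.diagonal_mul_diagonal, Matrix.trace_diagonal]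
  ring_nf

private lemma tri_of_quartic' (x y z : ℝ) (hy : 0 ≤ y) (hz : 0 ≤ z)
    (h : x^4 + y^4 + z^4 ≤ 2*(x^2*y^2 + y^2*z^2 + z^2*x^2)) : x ≤ y + z := by
  by_contra h'
  push_neg at h'
  have h1 : 0 < x + y + z := by linarith
  have h2 : 0 < x - y + z := by linarith
  have h3 : 0 < x + y - z := by linarith
  have h4 : y + z - x < 0 := by linarith
  have key : (x+y+z) * (x-y+z) * (x+y-z) * (y+z-x) < 0 :=
    mul_neg_of_pos_of_neg (by positivity) h4
  nlinarith [key]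

private lemma quartic_of_tri' (x y z : ℝ)
    (hxy : x ≤ y + z) (hyz : y ≤ x + z) (hzx : z ≤ x + y) :
    x^4 + y^4 + z^4 ≤ 2*(x^2*y^2 + y^2*z^2 + z^2*x^2) := by
  have key : 0 ≤ (x+y+z) * (x-y+z) * (x+y-z) * (y+z-x) := by
    have h1 : 0 ≤ x + y + z := by linarith
    have h2 : 0 ≤ x - y + z := by linarith
    have h3 : 0 ≤ x + y - z := by linarith
    have h4 : 0 ≤ y + z - x := by linarith
    positivity
  nlinarith [key]

private lemma lemA' (a b c d : ℝ) (ha : 0 < a) (hb : 0 < b) (hs : a + b + c + d = 0)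
    (h3 : 0 ≤ a^3 + b^3 + c^3 + d^3) (h4 : a * b * c * d ≤ 0) : False := by
  have hid : a^3 + b^3 + c^3 + d^3 = 3*(a*b*c + a*b*d + a*c*d + b*c*d) := by
    linear_combination (a^2 + b^2 + c^2 + d^2 - a*b - a*c - a*d - b*c - b*d - c*d) * hs
  have he3 : 0 ≤ a*b*c + a*b*d + a*c*d + b*c*d := by linarith
  rcases le_or_gt c 0 with hc | hc
  · rcases le_or_gt d 0 with hd | hd
    · have hcd : 0 ≤ c * d := by nlinarith [mul_nonneg (neg_nonneg.2 hc) (neg_nonneg.2 hd)]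
      have hab : 0 < a * b := mul_pos ha hb
      have h0 : a * b * c * d = 0 := le_antisymm h4 (by nlinarith)
      have : c * d = 0 := by
        rcases mul_eq_zero.mp (by nlinarith [h0] : (a*b) * (c*d) = 0) with h | h
        · exact absurd h (ne_of_gt hab)
        · exact h
      rcases mul_eq_zero.mp this with h | h
      · subst h; nlinarith [mul_pos ha hb]
      · subst h; nlinarith [mul_pos ha hb]
    · nlinarith [mul_pos ha hb, mul_pos ha hd, mul_pos hb hd, mul_pos (mul_pos ha hb) hd]
  · rcases le_or_gt d 0 with hd | hd
    · nlinarith [mul_pos ha hb, mul_pos ha hc, mul_pos hb hc, mul_pos (mul_pos ha hb) hc]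
    · nlinarith [mul_pos ha hb, mul_pos ha hc, mul_pos hb hd, mul_pos hc hd]

private lemma lemB' (a b c d : ℝ) (hb : b ≤ 0) (hc : c ≤ 0) (hd : d ≤ 0)
    (hs : a + b + c + d = 0) : a * b * c * d ≤ 0 := by
  have ha : 0 ≤ a := by linarith
  nlinarith [mul_nonneg ha (mul_nonneg (mul_nonneg (neg_nonneg.2 hb) (neg_nonneg.2 hc))
    (neg_nonneg.2 hd))]

private lemma finmk2 (h : 2 < 4) : (⟨2, h⟩ : Fin 4) = 2 := rfl
private lemma finmk3 (h : 3 < 4) : (⟨3, h⟩ : Fin 4) = 3 := rfl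

set_option maxHeartbeats 2000000 in
theorem stmt0 (p12 p13 p14 p23 p24 p34 : ℝ)
    (h12 : 0 ≤ p12) (h13 : 0 ≤ p13) (h14 : 0 ≤ p14)
    (h23 : 0 ≤ p23) (h24 : 0 ≤ p24) (h34 : 0 ≤ p34) :
    (Real.sqrt (p12 * p34) ≤ Real.sqrt (p13 * p24) + Real.sqrt (p14 * p23) ∧
     Real.sqrt (p13 * p24) ≤ Real.sqrt (p12 * p34) + Real.sqrt (p14 * p23) ∧
     Real.sqrt (p14 * p23) ≤ Real.sqrt (p12 * p34) + Real.sqrt (p13 * p24)) ↔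
    (∀ hM : (!![0, p12, p13, p14;
                p12, 0, p23, p24;
                p13, p23, 0, p34;
                p14, p24, p34, 0] : Matrix (Fin 4) (Fin 4) ℝ).IsHermitian,
      (Finset.univ.filter fun i => 0 < hM.eigenvalues i).card ≤ 1) := by
  set M : Matrix (Fin 4) (Fin 4) ℝ :=
    !![0, p12, p13, p14; p12, 0, p23, p24; p13, p23, 0, p34; p14, p24, p34, 0] with hMdef
  set x := Real.sqrt (p12 * p34) with hxdef
  set y := Real.sqrt (p13 * p24) with hydef
  set z := Real.sqrt (p14 * p23) with hzdef
  have hx : 0 ≤ x := Real.sqrt_nonneg _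
  have hy : 0 ≤ y := Real.sqrt_nonneg _
  have hz : 0 ≤ z := Real.sqrt_nonneg _
  have hx2 : x^2 = p12 * p34 := Real.sq_sqrt (mul_nonneg h12 h34)
  have hy2 : y^2 = p13 * p24 := Real.sq_sqrt (mul_nonneg h13 h24)
  have hz2 : z^2 = p14 * p23 := Real.sq_sqrt (mul_nonneg h14 h23)
  have htr : M.trace = 0 := by
    simp [hMdef, Matrix.trace, Matrix.diag, Fin.sum_univ_four]
  have htr3 : (M * M * M).trace
      = 6*(p12*p13*p23 + p12*p14*p24 + p13*p14*p34 + p23*p24*p34) := by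
    simp [hMdef, Matrix.trace, Matrix.diag, Matrix.mul_apply, Fin.sum_univ_four]
    ring
  have hdetval : M.det = x^4 + y^4 + z^4 - 2*(x^2*y^2 + y^2*z^2 + z^2*x^2) := by
    rw [show (x:ℝ)^4 = (x^2)^2 by ring, show (y:ℝ)^4 = (y^2)^2 by ring,
      show (z:ℝ)^4 = (z^2)^2 by ring, hx2, hy2, hz2]
    simp [hMdef, Matrix.det_succ_row_zero, Fin.sum_univ_succ, Fin.succAbove_ne_zero_zero,
      show Fin.succAbove (1:Fin 4) 2 = 3 from rfl, show Fin.succAbove (2:Fin 4) 2 = 3 from rfl,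
      show Fin.succAbove (3:Fin 4) 2 = 2 from rfl]
    ring
  constructor
  · rintro ⟨t1, t2, t3⟩ hM
    set l := hM.eigenvalues with hldef
    have hsum : l 0 + l 1 + l 2 + l 3 = 0 := by
      have := herm_trace' hM
      rw [htr, Fin.sum_univ_four] at this
      linarith
    have hcube : 0 ≤ (l 0)^3 + (l 1)^3 + (l 2)^3 + (l 3)^3 := by
      have := herm_trace_cube' hM
      rw [htr3, Fin.sum_univ_four] at this
      nlinarith [mul_nonneg (mul_nonneg h12 h13) h23, mul_nonneg (mul_nonneg h12 h14) h24,
        mul_nonneg (mul_nonneg h13 h14) h34, mul_nonneg (mul_nonneg h23 h24) h34]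
    have hprod : l 0 * l 1 * l 2 * l 3 ≤ 0 := by
      have hd := hM.det_eq_prod_eigenvalues
      rw [Fin.prod_univ_four] at hd
      simp only [RCLike.ofReal_real_eq_id, id] at hd
      have hq := quartic_of_tri' x y z t1 t2 t3
      rw [hdetval] at hd
      nlinarith [hd, hq]
    rw [Finset.card_le_one]
    intro i hi j hj
    simp only [Finset.mem_filter] at hi hj
    by_contra hne
    have hi' := hi.2
    have hj' := hj.2
    fin_cases i <;> fin_cases j <;> norm_num [finmk2, finmk3] at hi' hj' <;>
      first
      | exact hne rfl
      | exact lemA' (l 0) (l 1) (l 2) (l 3) hi' hj' (by linarith) (by linarith) (by linarith)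
      | exact lemA' (l 0) (l 2) (l 1) (l 3) hi' hj' (by linarith) (by linarith) (by linarith)
      | exact lemA' (l 0) (l 3) (l 1) (l 2) hi' hj' (by linarith) (by linarith) (by linarith)
      | exact lemA' (l 1) (l 0) (l 2) (l 3) hi' hj' (by linarith) (by linarith) (by linarith)
      | exact lemA' (l 1) (l 2) (l 0) (l 3) hi' hj' (by linarith) (by linarith) (by linarith)
      | exact lemA' (l 1) (l 3) (l 0) (l 2) hi' hj' (by linarith) (by linarith) (by linarith)
      | exact lemA' (l 2) (l 0) (l 1) (l 3) hi' hj' (by linarith) (by linarith) (by linarith)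
      | exact lemA' (l 2) (l 1) (l 0) (l 3) hi' hj' (by linarith) (by linarith) (by linarith)
      | exact lemA' (l 2) (l 3) (l 0) (l 1) hi' hj' (by linarith) (by linarith) (by linarith)
      | exact lemA' (l 3) (l 0) (l 1) (l 2) hi' hj' (by linarith) (by linarith) (by linarith)
      | exact lemA' (l 3) (l 1) (l 0) (l 2) hi' hj' (by linarith) (by linarith) (by linarith)
      | exact lemA' (l 3) (l 2) (l 0) (l 1) hi' hj' (by linarith) (by linarith) (by linarith)
  · intro H
    have hHerm : M.IsHermitian := by
      ext i j
      fin_cases i <;> fin_cases j <;> simp [hMdef, Matrix.conjTranspose_apply]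
    have hcard := H hHerm
    set l := hHerm.eigenvalues with hldef
    have hpos : ∀ i j : Fin 4, 0 < l i → 0 < l j → i = j := by
      intro i j hi hj
      exact Finset.card_le_one.mp hcard i (Finset.mem_filter.mpr ⟨Finset.mem_univ _, hi⟩)
        j (Finset.mem_filter.mpr ⟨Finset.mem_univ _, hj⟩)
    have hsum : l 0 + l 1 + l 2 + l 3 = 0 := by
      have := herm_trace' hHerm
      rw [htr, Fin.sum_univ_four] at this
      linarith
    have hdetle : M.det ≤ 0 := by
      have hd := hHerm.det_eq_prod_eigenvalues
      rw [Fin.prod_univ_four] at hd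
      simp only [RCLike.ofReal_real_eq_id, id] at hd
      rw [hd]
      rcases le_or_gt (l 0) 0 with h0 | h0 <;> rcases le_or_gt (l 1) 0 with h1 | h1 <;>
        rcases le_or_gt (l 2) 0 with h2 | h2 <;> rcases le_or_gt (l 3) 0 with h3 | h3 <;>
        first
        | exact absurd (hpos 0 1 h0 h1) (by decide)
        | exact absurd (hpos 0 2 h0 h2) (by decide)
        | exact absurd (hpos 0 3 h0 h3) (by decide)
        | exact absurd (hpos 1 2 h1 h2) (by decide)
        | exact absurd (hpos 1 3 h1 h3) (by decide)
        | exact absurd (hpos 2 3 h2 h3) (by decide)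
        | linarith [lemB' (l 0) (l 1) (l 2) (l 3) h1 h2 h3 (by linarith)]
        | linarith [lemB' (l 1) (l 0) (l 2) (l 3) h0 h2 h3 (by linarith)]
        | linarith [lemB' (l 2) (l 0) (l 1) (l 3) h0 h1 h3 (by linarith)]
        | linarith [lemB' (l 3) (l 0) (l 1) (l 2) h0 h1 h2 (by linarith)]
    rw [hdetval] at hdetle
    exact ⟨tri_of_quartic' x y z hy hz (by linarith),
      tri_of_quartic' y x z hx hz (by linarith),
      tri_of_quartic' z x y hx hy (by linarith)⟩
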